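/- Let M ⊆ H be a closed subspace, let ρ ∈ H with ‖ρ‖ ≤ B, let V = ρ + M⊥, and let ρ̃ ∈ V be the element of minimal norm in V. Then for every g ∈ H, |⟨ρ̃, g⟩ − ⟨ρ, g⟩| ≤ ‖ρ − P_M(ρ)‖ · ‖g − P_M(g)‖ ≤ ‖ρ‖ · ‖g − P_M(g)‖ ≤ B · ‖g − P_M(g)‖. -/

import Mathlib

open scoped RealInnerProductSpace

/-- Let `M ⊆ H` be a closed subspace of a real Hilbert space, `ρ ∈ H` with `‖ρ‖ ≤ B`,
`V = ρ + Mᗮ = {x | x - ρ ∈ Mᗮ}`, and let `ρ'` (the estimate ρ̃ = P_V(0)) be the element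
of minimal norm in `V`. Then for every `g ∈ H`,
`|⟪ρ', g⟫ - ⟪ρ, g⟫| ≤ ‖ρ - P_M ρ‖ * ‖g - P_M g‖ ≤ ‖ρ‖ * ‖g - P_M g‖ ≤ B * ‖g - P_M g‖`. -/
theorem stmt_9
    {H : Type*} [NormedAddCommGroup H] [InnerProductSpace ℝ H] [CompleteSpace H]
    (M : Submodule ℝ H) [CompleteSpace M]
    (ρ ρ' : H) (B : ℝ) (hB : ‖ρ‖ ≤ B)
    (V : Set H) (hV : V = {x : H | x - ρ ∈ Mᗮ})
    (hρ'V : ρ' ∈ V) (hmin : ∀ x ∈ V, ‖ρ'‖ ≤ ‖x‖) :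
    ∀ g : H,
      |⟪ρ', g⟫ - ⟪ρ, g⟫| ≤
        ‖ρ - (M.orthogonalProjectionOnto ρ : H)‖ * ‖g - (M.orthogonalProjectionOnto g : H)‖ ∧
      ‖ρ - (M.orthogonalProjectionOnto ρ : H)‖ * ‖g - (M.orthogonalProjectionOnto g : H)‖ ≤
        ‖ρ‖ * ‖g - (M.orthogonalProjectionOnto g : H)‖ ∧
      ‖ρ‖ * ‖g - (M.orthogonalProjectionOnto g : H)‖ ≤
        B * ‖g - (M.orthogonalProjectionOnto g : H)‖ := by

  -- Let P := orthogonal projection of ρ onto M.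
  set p : H := (M.orthogonalProjectionOnto ρ : H) with hp
  have hpM : p ∈ M := (M.orthogonalProjectionOnto ρ).2
  have hρp : ρ - p ∈ Mᗮ := Submodule.sub_starProjection_mem_orthogonal (K := M) ρ
  have hpV : p ∈ V := by
    rw [hV]
    simpa using Mᗮ.neg_mem hρp
  -- ρ' = p
  have hρ'p : ρ' - p ∈ Mᗮ := by
    have h1 : ρ' - ρ ∈ Mᗮ := by rw [hV] at hρ'V; exact hρ'V
    have := Mᗮ.add_mem h1 hρp
    simpa [sub_add_sub_cancel] using this
  have hinner : ⟪p, ρ' - p⟫ = 0 := (hρ'p p hpM).symm ▸ (hρ'p p hpM)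
  have hpyth : ‖ρ'‖ ^ 2 = ‖p‖ ^ 2 + ‖ρ' - p‖ ^ 2 := by
    have h0 : ⟪p, ρ' - p⟫ = 0 := hρ'p p hpM
    have := norm_add_sq_real p (ρ' - p)
    simp only [h0] at this
    simpa [add_sub_cancel] using this
  have hle : ‖ρ'‖ ≤ ‖p‖ := hmin p hpV
  have hzero : ‖ρ' - p‖ = 0 := by
    nlinarith [norm_nonneg (ρ' - p), norm_nonneg ρ', norm_nonneg p]
  have hρ'eq : ρ' = p := sub_eq_zero.mp (norm_eq_zero.mp hzero)
  intro g
  set q : H := (M.orthogonalProjectionOnto g : H) with hq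
  have hqM : q ∈ M := (M.orthogonalProjectionOnto g).2
  have hgq : g - q ∈ Mᗮ := Submodule.sub_starProjection_mem_orthogonal (K := M) g
  refine ⟨?_, ?_, ?_⟩
  · have key : ⟪ρ', g⟫ - ⟪ρ, g⟫ = -⟪ρ - p, g - q⟫ := by
      have h1 : ⟪ρ - p, q⟫ = 0 := by rw [real_inner_comm]; exact hρp q hqM
      rw [inner_sub_left] at h1
      rw [hρ'eq]
      simp only [inner_sub_left, inner_sub_right]
      linarith
    rw [key, abs_neg]
    exact abs_real_inner_le_norm _ _
  · have h0 : ⟪p, ρ - p⟫ = 0 := hρp p hpM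
    have hpy2 : ‖ρ‖ ^ 2 = ‖p‖ ^ 2 + ‖ρ - p‖ ^ 2 := by
      have := norm_add_sq_real p (ρ - p)
      simp only [h0] at this
      simpa [add_sub_cancel] using this
    have : ‖ρ - p‖ ≤ ‖ρ‖ := by
      nlinarith [norm_nonneg (ρ - p), norm_nonneg ρ, norm_nonneg p]
    exact mul_le_mul_of_nonneg_right this (norm_nonneg _)
  · exact mul_le_mul_of_nonneg_right hB (norm_nonneg _)
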